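/- Let T_t be a semigroup of integral operators whose kernel satisfies the two-sided Gaussian bounds. Then there exists a measurable function ω on X with 0 < C^{-1} ≤ ω(x) ≤ C such that T_t ω = ω for every t > 0 (ω is L-harmonic). -/

import Mathlib

open MeasureTheory Metric

open Filter
open scoped ENNReal NNReal


lemma aux_summable {Cdbl c₂ C₀ : ℝ} (hCdbl : 1 ≤ Cdbl) (hc₂ : 0 < c₂) (hC₀ : 0 < C₀) :
    Summable (fun k : ℕ => C₀ * Cdbl ^ k * Real.exp (-c₂ * (4 ^ k - 1) / 4)) := by
  have hCd0 : 0 < Cdbl := lt_of_lt_of_le one_pos hCdbl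
  have hpos : ∀ k : ℕ, 0 < C₀ * Cdbl ^ k * Real.exp (-c₂ * (4 ^ k - 1) / 4) := fun k => by positivity
  have hratio : Tendsto (fun k : ℕ => Cdbl * Real.exp (-(3 * c₂ / 4) * 4 ^ k)) atTop (nhds 0) := by
    have h4 : Tendsto (fun k : ℕ => (4 : ℝ) ^ k) atTop atTop :=
      tendsto_pow_atTop_atTop_of_one_lt (by norm_num)
    have hbot : Tendsto (fun k : ℕ => -(3 * c₂ / 4) * 4 ^ k) atTop atBot :=
      h4.const_mul_atTop_of_neg (show -(3 * c₂ / 4) < 0 by nlinarith)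
    have h1 := (Real.tendsto_exp_atBot).comp hbot
    have h2 := h1.const_mul Cdbl
    simpa using h2
  apply summable_of_ratio_norm_eventually_le (show (2⁻¹ : ℝ) < 1 by norm_num)
  have hev : ∀ᶠ k : ℕ in atTop, Cdbl * Real.exp (-(3 * c₂ / 4) * 4 ^ k) ≤ 2⁻¹ :=
    (hratio.eventually_lt_const (show (0:ℝ) < 2⁻¹ by norm_num)).mono fun k hk => hk.le
  filter_upwards [hev] with k hk
  have he : Real.exp (-(3 * c₂ / 4) * 4 ^ k) * Real.exp (-c₂ * ((4:ℝ) ^ k - 1) / 4)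
      = Real.exp (-c₂ * ((4:ℝ) ^ k * 4 - 1) / 4) := by rw [← Real.exp_add]; congr 1; ring
  have key : C₀ * Cdbl ^ (k+1) * Real.exp (-c₂ * (4 ^ (k+1) - 1) / 4)
      = (Cdbl * Real.exp (-(3 * c₂ / 4) * 4 ^ k)) * (C₀ * Cdbl ^ k * Real.exp (-c₂ * (4 ^ k - 1) / 4)) := by
    rw [pow_succ, pow_succ, ← he]; ring
  rw [Real.norm_eq_abs, Real.norm_eq_abs, abs_of_pos (hpos _), abs_of_pos (hpos _), key]
  nlinarith [hpos k]

lemma gauss_upper {X : Type*} [MetricSpace X] [MeasurableSpace X] [BorelSpace X] (μ : Measure X)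
    (x : X) (t : ℝ) (ht : 0 < t)
    (hvol : ∀ r : ℝ, 0 < r → 0 < (μ (closedBall x r)).toReal)
    {Cdbl : ℝ} (hCdbl : 1 ≤ Cdbl)
    (hdouble : ∀ r : ℝ, 0 < r →
      (μ (closedBall x (2 * r))).toReal ≤ Cdbl * (μ (closedBall x r)).toReal)
    {C₀ c₂ : ℝ} (hC₀ : 0 < C₀) (hc₂ : 0 < c₂)
    {K : X → ℝ}
    (hKub : ∀ y, K y ≤ C₀ / (μ (closedBall x (Real.sqrt t))).toReal *
        Real.exp (-c₂ * dist x y ^ 2 / t)) :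
    ∫⁻ y, ENNReal.ofReal (K y) ∂μ ≤
      ENNReal.ofReal (∑' k : ℕ, C₀ * Cdbl ^ k * Real.exp (-c₂ * (4 ^ k - 1) / 4)) := by
  have hCd0 : 0 < Cdbl := lt_of_lt_of_le one_pos hCdbl
  set r := Real.sqrt t with hrdef
  have hr : 0 < r := Real.sqrt_pos.mpr ht
  have hrsq : r ^ 2 = t := Real.sq_sqrt ht.le
  set V := (μ (closedBall x r)).toReal with hVdef
  have hV : 0 < V := hvol r hr
  have hfin : ∀ R : ℝ, 0 < R → μ (closedBall x R) ≠ ⊤ := by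
    intro R hR h
    have := hvol R hR
    rw [h] at this; simp at this
  have hiter : ∀ k : ℕ, (μ (closedBall x (2 ^ k * r))).toReal ≤ Cdbl ^ k * V := by
    intro k; induction k with
    | zero => simp [hVdef]
    | succ k ih =>
        have h2 : (2:ℝ) ^ (k+1) * r = 2 * (2 ^ k * r) := by ring
        rw [h2]
        calc (μ (closedBall x (2 * (2 ^ k * r)))).toReal
            ≤ Cdbl * (μ (closedBall x (2 ^ k * r))).toReal := hdouble _ (by positivity)
          _ ≤ Cdbl * (Cdbl ^ k * V) := by nlinarith
          _ = Cdbl ^ (k+1) * V := by ring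
  set S : ℕ → Set X := fun k =>
    Nat.casesOn k (closedBall x r) fun j => closedBall x (2 ^ (j+1) * r) \ closedBall x (2 ^ j * r)
    with hSdef
  have huniv : (⋃ k, S k) = Set.univ := by
    apply Set.eq_univ_of_forall
    intro y
    have hex : ∃ k : ℕ, dist y x ≤ 2 ^ k * r := by
      obtain ⟨n, hn⟩ := pow_unbounded_of_one_lt (dist y x / r) (show (1:ℝ) < 2 by norm_num)
      exact ⟨n, by rw [div_lt_iff₀ hr] at hn; linarith⟩
    rcases Nat.lt_or_ge 0 (Nat.find hex) with hpos' | hzero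
    · refine Set.mem_iUnion.mpr ⟨Nat.find hex, ?_⟩
      obtain ⟨j, hj⟩ := Nat.exists_eq_succ_of_ne_zero (Nat.pos_iff_ne_zero.mp hpos')
      rw [hj]
      constructor
      · have hspec := Nat.find_spec hex; rw [hj] at hspec; exact mem_closedBall.mpr hspec
      · intro hmem
        exact Nat.find_min hex (show j < Nat.find hex by rw [hj]; exact j.lt_succ_self)
          (mem_closedBall.mp hmem)
    · refine Set.mem_iUnion.mpr ⟨0, ?_⟩
      have h0 : Nat.find hex = 0 := Nat.le_zero.mp hzero
      have := Nat.find_spec hex; rw [h0] at this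
      show y ∈ closedBall x r
      simpa using this
  have hbound : ∀ k : ℕ, ∫⁻ y in S k, ENNReal.ofReal (K y) ∂μ ≤
      ENNReal.ofReal (C₀ * Cdbl ^ k * Real.exp (-c₂ * (4 ^ k - 1) / 4)) := by
    intro k
    have hKb : ∀ y ∈ S k, ENNReal.ofReal (K y) ≤
        ENNReal.ofReal (C₀ / V * Real.exp (-c₂ * (4 ^ k - 1) / 4)) := by
      intro y hy
      apply ENNReal.ofReal_le_ofReal
      refine le_trans (hKub y) ?_
      have hexp : Real.exp (-c₂ * dist x y ^ 2 / t) ≤ Real.exp (-c₂ * (4 ^ k - 1) / 4) := by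
        apply Real.exp_le_exp.mpr
        rcases k with _ | j
        · have h1 : (0:ℝ) ≤ c₂ * dist x y ^ 2 / t := by positivity
          simp only [pow_zero]
          have h2 : -c₂ * ((1:ℝ) - 1) / 4 = 0 := by ring
          have h3 : -c₂ * dist x y ^ 2 / t = -(c₂ * dist x y ^ 2 / t) := by ring
          rw [h2, h3]
          linarith
        · obtain ⟨hy1, hy2⟩ := hy
          have hd : 2 ^ j * r < dist y x := by
            by_contra h
            exact hy2 (mem_closedBall.mpr (not_lt.mp h))
          have hd' : ((2:ℝ) ^ j * r) ^ 2 < dist x y ^ 2 := by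
            rw [dist_comm]
            exact pow_lt_pow_left₀ hd (by positivity) (by norm_num)
          have h4 : ((2:ℝ) ^ j) ^ 2 = 4 ^ j := by
            rw [← pow_mul, mul_comm j 2, pow_mul]
            norm_num
          have hq : (4:ℝ) ^ j * t < dist x y ^ 2 := by
            calc (4:ℝ) ^ j * t = ((2:ℝ) ^ j) ^ 2 * r ^ 2 := by rw [h4, hrsq]
              _ = ((2:ℝ) ^ j * r) ^ 2 := by ring
              _ < dist x y ^ 2 := hd'
          have hgoal : (4:ℝ) ^ j ≤ dist x y ^ 2 / t := by
            rw [le_div_iff₀ ht]; linarith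
          have h41 : ((4:ℝ) ^ (j+1) - 1) / 4 ≤ 4 ^ j := by
            have : (4:ℝ) ^ (j+1) = 4 * 4 ^ j := by ring
            rw [this]; nlinarith [pow_pos (show (0:ℝ) < 4 by norm_num) j]
          calc -c₂ * dist x y ^ 2 / t = -(c₂ * (dist x y ^ 2 / t)) := by ring
            _ ≤ -(c₂ * 4 ^ j) := by nlinarith
            _ ≤ -c₂ * ((4:ℝ) ^ (j+1) - 1) / 4 := by nlinarith
      calc C₀ / V * Real.exp (-c₂ * dist x y ^ 2 / t)
          ≤ C₀ / V * Real.exp (-c₂ * (4 ^ k - 1) / 4) := by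
            have : (0:ℝ) < C₀ / V := by positivity
            nlinarith [Real.exp_pos (-c₂ * dist x y ^ 2 / t)]
        _ = C₀ / V * Real.exp (-c₂ * (4 ^ k - 1) / 4) := rfl
    have hμS : μ (S k) ≤ ENNReal.ofReal (Cdbl ^ k * V) := by
      have hsub : S k ⊆ closedBall x (2 ^ k * r) := by
        rcases k with _ | j
        · simp [hSdef]
        · exact Set.diff_subset
      calc μ (S k) ≤ μ (closedBall x (2 ^ k * r)) := measure_mono hsub
        _ = ENNReal.ofReal ((μ (closedBall x (2 ^ k * r))).toReal) :=
            (ENNReal.ofReal_toReal (hfin _ (by positivity))).symm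
        _ ≤ ENNReal.ofReal (Cdbl ^ k * V) := ENNReal.ofReal_le_ofReal (hiter k)
    calc ∫⁻ y in S k, ENNReal.ofReal (K y) ∂μ
        ≤ ∫⁻ _ in S k, ENNReal.ofReal (C₀ / V * Real.exp (-c₂ * (4 ^ k - 1) / 4)) ∂μ :=
          setLIntegral_mono measurable_const hKb
      _ = ENNReal.ofReal (C₀ / V * Real.exp (-c₂ * (4 ^ k - 1) / 4)) * μ (S k) :=
          setLIntegral_const _ _
      _ ≤ ENNReal.ofReal (C₀ / V * Real.exp (-c₂ * (4 ^ k - 1) / 4)) *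
            ENNReal.ofReal (Cdbl ^ k * V) := by gcongr
      _ = ENNReal.ofReal (C₀ / V * Real.exp (-c₂ * (4 ^ k - 1) / 4) * (Cdbl ^ k * V)) :=
          (ENNReal.ofReal_mul (by positivity)).symm
      _ = ENNReal.ofReal (C₀ * Cdbl ^ k * Real.exp (-c₂ * (4 ^ k - 1) / 4)) := by
          congr 1; field_simp
  calc ∫⁻ y, ENNReal.ofReal (K y) ∂μ = ∫⁻ y in Set.univ, ENNReal.ofReal (K y) ∂μ :=
        (setLIntegral_univ _).symm
    _ = ∫⁻ y in ⋃ k, S k, ENNReal.ofReal (K y) ∂μ := by rw [huniv]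
    _ ≤ ∑' k, ∫⁻ y in S k, ENNReal.ofReal (K y) ∂μ := lintegral_iUnion_le _ _
    _ ≤ ∑' k, ENNReal.ofReal (C₀ * Cdbl ^ k * Real.exp (-c₂ * (4 ^ k - 1) / 4)) :=
        ENNReal.tsum_le_tsum hbound
    _ = ENNReal.ofReal (∑' k : ℕ, C₀ * Cdbl ^ k * Real.exp (-c₂ * (4 ^ k - 1) / 4)) :=
        (ENNReal.ofReal_tsum_of_nonneg (fun k => by positivity)
          (aux_summable hCdbl hc₂ hC₀)).symm
lemma exists_countable_envelope {X : Type*} [MeasurableSpace X] (μ : Measure X)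
    (ρ : X → ℝ) (hρm : Measurable ρ) (hρpos : ∀ y, 0 < ρ y) (hρint : Integrable ρ μ)
    (F : ℝ → X → ℝ) (s : Set ℝ) (u₀ : ℝ) (hu₀ : u₀ ∈ s)
    (hFm : ∀ u ∈ s, Measurable (F u)) (A B : ℝ)
    (hFb : ∀ u ∈ s, ∀ x, A ≤ F u x ∧ F u x ≤ B) :
    ∃ D : ℕ → ℝ, (∀ i, D i ∈ s) ∧
      ∀ u ∈ s, ∀ᵐ x ∂μ, F u x ≤ ⨆ i, F (D i) x := by
  classical
  set G : (ℕ → ℝ) → X → ℝ := fun D x => ⨆ i, F (D i) x with hGdef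
  have hbdd : ∀ (D : ℕ → ℝ), (∀ i, D i ∈ s) → ∀ x, BddAbove (Set.range fun i => F (D i) x) := by
    intro D hD x
    exact ⟨B, by rintro b ⟨i, rfl⟩; exact (hFb _ (hD i) x).2⟩
  have hGle : ∀ (D : ℕ → ℝ), (∀ i, D i ∈ s) → ∀ x, G D x ≤ B := by
    intro D hD x; exact ciSup_le fun i => (hFb _ (hD i) x).2
  have hGge : ∀ (D : ℕ → ℝ), (∀ i, D i ∈ s) → ∀ x, A ≤ G D x := by
    intro D hD x; exact le_trans (hFb _ (hD 0) x).1 (le_ciSup (hbdd D hD x) 0)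
  have hGm : ∀ (D : ℕ → ℝ), (∀ i, D i ∈ s) → Measurable (G D) := by
    intro D hD; exact Measurable.iSup fun i => hFm _ (hD i)
  have hGint : ∀ (D : ℕ → ℝ), (∀ i, D i ∈ s) → Integrable (fun x => G D x * ρ x) μ := by
    intro D hD
    exact hρint.bdd_mul (hGm D hD).aestronglyMeasurable
      (ae_of_all _ fun x => by
        rw [Real.norm_eq_abs, abs_le]
        exact ⟨le_trans (neg_le_neg (le_max_left (|A|) (|B|))) (le_trans (neg_abs_le A) (hGge D hD x)),
          le_trans (hGle D hD x) (le_trans (le_abs_self B) (le_max_right (|A|) (|B|)))⟩)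
  set I : (X → ℝ) → ℝ := fun g => ∫ x, g x * ρ x ∂μ with hIdef
  have hImono : ∀ (D D' : ℕ → ℝ), (∀ i, D i ∈ s) → (∀ i, D' i ∈ s) →
      (∀ x, G D x ≤ G D' x) → I (G D) ≤ I (G D') := by
    intro D D' hD hD' hle
    exact integral_mono (hGint D hD) (hGint D' hD') fun x =>
      mul_le_mul_of_nonneg_right (hle x) (hρpos x).le
  set A' : Set ℝ := {b | ∃ D : ℕ → ℝ, (∀ i, D i ∈ s) ∧ b = I (G D)} with hA'def
  have hne : A'.Nonempty := ⟨I (G fun _ => u₀), fun _ => u₀, fun _ => hu₀, rfl⟩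
  have hba : BddAbove A' := by
    refine ⟨B * ∫ x, ρ x ∂μ, ?_⟩
    rintro b ⟨D, hD, rfl⟩
    calc I (G D) ≤ ∫ x, B * ρ x ∂μ := by
          apply integral_mono (hGint D hD) (hρint.const_mul B) fun x =>
            mul_le_mul_of_nonneg_right (hGle D hD x) (hρpos x).le
      _ = B * ∫ x, ρ x ∂μ := integral_const_mul B ρ
  set β := sSup A' with hβdef
  have hseq : ∀ k : ℕ, ∃ b ∈ A', β - 1/(k+1) < b := by
    intro k
    apply exists_lt_of_lt_csSup hne
    have : (0:ℝ) < 1/(k+1) := by positivity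
    linarith
  choose bk hbkA hbk using hseq
  choose Dk hDk hbeq using hbkA
  set Ds : ℕ → ℝ := fun j => Dk (Nat.unpair j).1 (Nat.unpair j).2 with hDsdef
  have hDs : ∀ i, Ds i ∈ s := fun i => hDk _ _
  have hGDsk : ∀ k, ∀ x, G (Dk k) x ≤ G Ds x := by
    intro k x
    apply ciSup_le
    intro i
    have : F (Dk k i) x = F (Ds (Nat.pair k i)) x := by simp [hDsdef, Nat.unpair_pair]
    rw [this]
    exact le_ciSup (hbdd Ds hDs x) (Nat.pair k i)
  have hIub : I (G Ds) ≤ β := le_csSup hba ⟨Ds, hDs, rfl⟩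
  have hIlb : β ≤ I (G Ds) := by
    by_contra hcon
    push_neg at hcon
    obtain ⟨k, hk⟩ := exists_nat_one_div_lt (show (0:ℝ) < β - I (G Ds) by linarith)
    have h1 : β - 1/(k+1) < bk k := hbk k
    have h2 : bk k = I (G (Dk k)) := hbeq k
    have h3 : I (G (Dk k)) ≤ I (G Ds) := hImono _ _ (hDk k) hDs (hGDsk k)
    have : (1:ℝ)/(k+1) < β - I (G Ds) := by exact_mod_cast hk
    linarith
  refine ⟨Ds, hDs, ?_⟩
  intro u hu
  set D' : ℕ → ℝ := fun j => Nat.casesOn j u (fun i => Ds i) with hD'def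
  have hD' : ∀ i, D' i ∈ s := by intro i; cases i with
    | zero => exact hu
    | succ i => exact hDs i
  have hFuD' : ∀ x, F u x ≤ G D' x := fun x => le_ciSup (hbdd D' hD' x) 0
  have hGsD' : ∀ x, G Ds x ≤ G D' x := by
    intro x
    apply ciSup_le fun i => le_ciSup (hbdd D' hD' x) (i+1)
  have hID' : I (G D') ≤ β := le_csSup hba ⟨D', hD', rfl⟩
  have hID'' : I (G D') ≤ I (G Ds) := le_trans hID' hIlb
  have hdiff : ∫ x, (G D' x - G Ds x) * ρ x ∂μ = 0 := by
    have heq : ∀ x, (G D' x - G Ds x) * ρ x = G D' x * ρ x - G Ds x * ρ x := fun x => by ring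
    have : ∫ x, (G D' x - G Ds x) * ρ x ∂μ = I (G D') - I (G Ds) := by
      simp_rw [heq]
      exact integral_sub (hGint D' hD') (hGint Ds hDs)
    rw [this]
    have hge : I (G Ds) ≤ I (G D') := hImono _ _ hDs hD' hGsD'
    linarith
  have hint2 : Integrable (fun x => (G D' x - G Ds x) * ρ x) μ := by
    have heq : (fun x => (G D' x - G Ds x) * ρ x) = fun x => G D' x * ρ x - G Ds x * ρ x := by
      funext x; ring
    rw [heq]
    exact (hGint D' hD').sub (hGint Ds hDs)
  have hae : (fun x => (G D' x - G Ds x) * ρ x) =ᵐ[μ] 0 := by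
    rw [← integral_eq_zero_iff_of_nonneg _ hint2]
    · exact hdiff
    · intro x
      exact mul_nonneg (by linarith [hGsD' x]) (hρpos x).le
  filter_upwards [hae] with x hx
  have hρx := (hρpos x).ne'
  have : G D' x - G Ds x = 0 := by
    by_contra h
    exact h (by
      have := mul_eq_zero.mp hx
      rcases this with h1 | h2
      · exact h1
      · exact absurd h2 hρx)
  calc F u x ≤ G D' x := hFuD' x
    _ = G Ds x := by linarith


/-- If the kernel `T_t(x,y)` of a semigroup satisfies two-sided Gaussian bounds on a
space of homogeneous type, then there exists a bounded, bounded-below measurable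
function `ω` which is `L`-harmonic: `T_t ω = ω` for every `t > 0`. -/
theorem exists_bounded_harmonic_function
    {X : Type*} [MetricSpace X] [MeasurableSpace X] [BorelSpace X]
    (μ : Measure X)
    (hvol : ∀ (x : X) (r : ℝ), 0 < r → 0 < (μ (closedBall x r)).toReal)
    (Cdbl : ℝ) (hCdbl : 0 < Cdbl)
    (hdouble : ∀ (x : X) (r : ℝ), 0 < r →
      (μ (closedBall x (2 * r))).toReal ≤ Cdbl * (μ (closedBall x r)).toReal)
    (T : ℝ → X → X → ℝ)
    (hTmeas : ∀ t : ℝ, Measurable (Function.uncurry (T t)))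
    (hTsemigroup : ∀ s t : ℝ, 0 < s → 0 < t → ∀ x y : X,
      T (s + t) x y = ∫ z, T s x z * T t z y ∂μ)
    (C₀ c₁ c₂ : ℝ) (hC₀ : 0 < C₀) (hc₂ : 0 < c₂) (hc₁₂ : c₂ ≤ c₁)
    (hgauss : ∀ (t : ℝ), 0 < t → ∀ x y : X,
      C₀⁻¹ / (μ (closedBall x (Real.sqrt t))).toReal *
          Real.exp (-c₁ * dist x y ^ 2 / t) ≤ T t x y ∧
      T t x y ≤ C₀ / (μ (closedBall x (Real.sqrt t))).toReal *
          Real.exp (-c₂ * dist x y ^ 2 / t)) :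
    ∃ C > (0 : ℝ), ∃ ω : X → ℝ, Measurable ω ∧
      (∀ x : X, C⁻¹ ≤ ω x ∧ ω x ≤ C) ∧
      (∀ t : ℝ, 0 < t → ∀ᵐ x ∂μ, ∫ y, T t x y * ω y ∂μ = ω x) := by
  classical
  rcases isEmpty_or_nonempty X with hX | hX
  · exact ⟨1, one_pos, fun _ => 1, measurable_const, fun x => hX.elim x,
      fun t ht => ae_of_all _ fun x => hX.elim x⟩
  obtain ⟨x₀⟩ := hX
  have hfin : ∀ (x : X) (R : ℝ), 0 < R → μ (closedBall x R) ≠ ⊤ := by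
    intro x R hR h
    have := hvol x R hR
    rw [h] at this; simp at this
  have hCdbl1 : 1 ≤ Cdbl := by
    have h1 := hvol x₀ 1 one_pos
    have h2 := hdouble x₀ 1 one_pos
    have h3 : (μ (closedBall x₀ 1)).toReal ≤ (μ (closedBall x₀ (2*1))).toReal :=
      ENNReal.toReal_mono (hfin x₀ (2*1) (by norm_num))
        (measure_mono (closedBall_subset_closedBall (by norm_num)))
    nlinarith
  haveI : SigmaFinite μ := by
    refine ⟨⟨⟨fun n => closedBall x₀ (n+1), fun _ => Set.mem_univ _, fun n => ?_, ?_⟩⟩⟩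
    · exact lt_top_iff_ne_top.mpr (hfin x₀ (n+1) (by positivity))
    · apply Set.eq_univ_of_forall
      intro y
      refine Set.mem_iUnion.mpr ⟨⌈dist y x₀⌉₊, ?_⟩
      simp only [mem_closedBall]
      calc dist y x₀ ≤ (⌈dist y x₀⌉₊ : ℝ) := Nat.le_ceil _
        _ ≤ (⌈dist y x₀⌉₊ : ℝ) + 1 := by linarith
  have hc₁ : 0 < c₁ := lt_of_lt_of_le hc₂ hc₁₂
  set M₀ : ℝ := ∑' k : ℕ, C₀ * Cdbl ^ k * Real.exp (-c₂ * (4 ^ k - 1) / 4) with hM₀def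
  have hsum := aux_summable hCdbl1 hc₂ hC₀
  have hM₀ : C₀ ≤ M₀ := by
    calc C₀ = C₀ * Cdbl ^ (0:ℕ) * Real.exp (-c₂ * ((4:ℝ) ^ (0:ℕ) - 1) / 4) := by norm_num
      _ ≤ M₀ := Summable.le_tsum hsum 0 fun j _ => by positivity
  have hM₀pos : 0 < M₀ := lt_of_lt_of_le hC₀ hM₀
  set m₀ : ℝ := C₀⁻¹ * Real.exp (-c₁) with hm₀def
  have hm₀pos : 0 < m₀ := by positivity
  have hTpos : ∀ t : ℝ, 0 < t → ∀ x y, 0 < T t x y := by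
    intro t ht x y
    refine lt_of_lt_of_le ?_ (hgauss t ht x y).1
    have hV := hvol x (Real.sqrt t) (Real.sqrt_pos.mpr ht)
    positivity
  have hT0 : ∀ t : ℝ, 0 < t → ∀ x y, 0 ≤ T t x y := fun t ht x y => (hTpos t ht x y).le
  have hTm1 : ∀ (t : ℝ) (x : X), Measurable (T t x) :=
    fun t x => (hTmeas t).comp measurable_prodMk_left
  have hKlint : ∀ t : ℝ, 0 < t → ∀ x, ∫⁻ y, ENNReal.ofReal (T t x y) ∂μ ≤ ENNReal.ofReal M₀ :=
    fun t ht x => gauss_upper μ x t ht (hvol x) hCdbl1 (hdouble x) hC₀ hc₂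
      (fun y => (hgauss t ht x y).2)
  have hKint : ∀ t : ℝ, 0 < t → ∀ x, Integrable (fun y => T t x y) μ := by
    intro t ht x
    refine ⟨(hTm1 t x).aestronglyMeasurable, ?_⟩
    show (∫⁻ y, (‖T t x y‖₊ : ℝ≥0∞) ∂μ) < ⊤
    have heq : ∀ y, (‖T t x y‖₊ : ℝ≥0∞) = ENNReal.ofReal (T t x y) :=
      fun y => Real.enorm_eq_ofReal (hT0 t ht x y)
    calc ∫⁻ y, (‖T t x y‖₊ : ℝ≥0∞) ∂μ = ∫⁻ y, ENNReal.ofReal (T t x y) ∂μ :=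
          lintegral_congr heq
      _ ≤ ENNReal.ofReal M₀ := hKlint t ht x
      _ < ⊤ := ENNReal.ofReal_lt_top
  -- the mass function W and the action of the semigroup
  set W : ℝ → X → ℝ := fun u x => ∫ y, T u x y ∂μ with hWdef
  have hWlint : ∀ u : ℝ, 0 < u → ∀ x, W u x = (∫⁻ y, ENNReal.ofReal (T u x y) ∂μ).toReal := by
    intro u hu x
    exact integral_eq_lintegral_of_nonneg_ae (ae_of_all _ (fun y => hT0 u hu x y))
      (hTm1 u x).aestronglyMeasurable
  have hWub : ∀ u : ℝ, 0 < u → ∀ x, W u x ≤ M₀ := by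
    intro u hu x
    rw [hWlint u hu x]
    calc (∫⁻ y, ENNReal.ofReal (T u x y) ∂μ).toReal ≤ (ENNReal.ofReal M₀).toReal :=
        ENNReal.toReal_mono ENNReal.ofReal_ne_top (hKlint u hu x)
      _ = M₀ := ENNReal.toReal_ofReal hM₀pos.le
  have hWlb : ∀ u : ℝ, 0 < u → ∀ x, m₀ ≤ W u x := by
    intro u hu x
    have hr : 0 < Real.sqrt u := Real.sqrt_pos.mpr hu
    set r := Real.sqrt u with hrdef
    set V := (μ (closedBall x r)).toReal with hVdef
    have hV : 0 < V := hvol x r hr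
    have hlow : ∀ y ∈ closedBall x r, C₀⁻¹ / V * Real.exp (-c₁) ≤ T u x y := by
      intro y hy
      refine le_trans ?_ (hgauss u hu x y).1
      have hd : dist x y ≤ r := by rw [dist_comm]; exact mem_closedBall.mp hy
      have hrsq : r ^ 2 = u := Real.sq_sqrt hu.le
      have hd2 : dist x y ^ 2 ≤ u := by nlinarith [dist_nonneg (x := x) (y := y)]
      have hexp : Real.exp (-c₁) ≤ Real.exp (-c₁ * dist x y ^ 2 / u) := by
        apply Real.exp_le_exp.mpr
        have hq : c₁ * dist x y ^ 2 / u ≤ c₁ := by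
          rw [div_le_iff₀ hu]; nlinarith
        calc -c₁ ≤ -(c₁ * dist x y ^ 2 / u) := by linarith
          _ = -c₁ * dist x y ^ 2 / u := by ring
      exact mul_le_mul_of_nonneg_left hexp (by positivity)
    have h1 : ∫ y in closedBall x r, (C₀⁻¹ / V * Real.exp (-c₁)) ∂μ ≤
        ∫ y in closedBall x r, T u x y ∂μ :=
      setIntegral_mono_on (integrableOn_const (hfin x r hr))
        ((hKint u hu x).integrableOn) measurableSet_closedBall hlow
    have h2 : ∫ _ in closedBall x r, (C₀⁻¹ / V * Real.exp (-c₁)) ∂μ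
        = V * (C₀⁻¹ / V * Real.exp (-c₁)) := by
      rw [setIntegral_const, smul_eq_mul]; rfl
    have h3 : ∫ y in closedBall x r, T u x y ∂μ ≤ W u x :=
      setIntegral_le_integral (hKint u hu x) (ae_of_all _ (hT0 u hu x))
    have h4 : V * (C₀⁻¹ / V * Real.exp (-c₁)) = m₀ := by
      rw [hm₀def]; field_simp [hV.ne']
    linarith
  have hWmeas : ∀ u : ℝ, 0 < u → Measurable (W u) := by
    intro u hu
    have hjm : Measurable (Function.uncurry fun x y => ENNReal.ofReal (T u x y)) :=
      ENNReal.measurable_ofReal.comp (hTmeas u)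
    have h : Measurable fun x => ∫⁻ y, ENNReal.ofReal (T u x y) ∂μ :=
      Measurable.lintegral_prod_right hjm
    have heq : W u = fun x => (∫⁻ y, ENNReal.ofReal (T u x y) ∂μ).toReal := funext (hWlint u hu)
    rw [heq]
    exact h.ennreal_toReal
  set act : ℝ → (X → ℝ) → X → ℝ := fun t f x => ∫ y, T t x y * f y ∂μ with hactdef
  have hIntmul : ∀ t : ℝ, 0 < t → ∀ (x : X) (f : X → ℝ), Measurable f → ∀ B' : ℝ,
      (∀ y, |f y| ≤ B') → Integrable (fun y => T t x y * f y) μ := by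
    intro t ht x f hf B' hB'
    refine Integrable.mono' ((hKint t ht x).const_mul B')
      (((hTm1 t x).mul hf).aestronglyMeasurable) (ae_of_all _ fun y => ?_)
    rw [Real.norm_eq_abs, abs_mul, abs_of_nonneg (hT0 t ht x y)]
    calc T t x y * |f y| ≤ T t x y * B' := mul_le_mul_of_nonneg_left (hB' y) (hT0 t ht x y)
      _ = B' * T t x y := mul_comm _ _
  have hact_eq : ∀ t : ℝ, 0 < t → ∀ f : X → ℝ, Measurable f → (∀ y, 0 ≤ f y) → ∀ x,
      act t f x = (∫⁻ y, ENNReal.ofReal (T t x y * f y) ∂μ).toReal := by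
    intro t ht f hf hf0 x
    exact integral_eq_lintegral_of_nonneg_ae
      (ae_of_all _ (fun y => mul_nonneg (hT0 t ht x y) (hf0 y)))
      ((hTm1 t x).mul hf).aestronglyMeasurable
  have hact_meas : ∀ t : ℝ, 0 < t → ∀ f : X → ℝ, Measurable f → (∀ y, 0 ≤ f y) →
      Measurable (act t f) := by
    intro t ht f hf hf0
    have hjm : Measurable (Function.uncurry fun x y => ENNReal.ofReal (T t x y * f y)) :=
      ENNReal.measurable_ofReal.comp ((hTmeas t).mul (hf.comp measurable_snd))
    have h : Measurable fun x => ∫⁻ y, ENNReal.ofReal (T t x y * f y) ∂μ :=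
      Measurable.lintegral_prod_right hjm
    have heq : act t f = fun x => (∫⁻ y, ENNReal.ofReal (T t x y * f y) ∂μ).toReal :=
      funext (hact_eq t ht f hf hf0)
    rw [heq]
    exact h.ennreal_toReal
  have hact_mono_ae : ∀ t : ℝ, 0 < t → ∀ f g : X → ℝ, Measurable f → Measurable g →
      ∀ Bf Bg : ℝ, (∀ y, |f y| ≤ Bf) → (∀ y, |g y| ≤ Bg) → (f ≤ᵐ[μ] g) →
      ∀ x, act t f x ≤ act t g x := by
    intro t ht f g hf hg Bf Bg hBf hBg hle x
    apply integral_mono_ae (hIntmul t ht x f hf Bf hBf) (hIntmul t ht x g hg Bg hBg)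
    filter_upwards [hle] with y hy
    exact mul_le_mul_of_nonneg_left hy (hT0 t ht x y)
  -- integrability of products of kernels, via the semigroup identity
  have hInt2 : ∀ s u : ℝ, 0 < s → 0 < u → ∀ x z, Integrable (fun y => T s x y * T u y z) μ := by
    intro s u hs hu x z
    by_contra hni
    have h0 : T (s+u) x z = 0 := by rw [hTsemigroup s u hs hu x z, integral_undef hni]
    exact (hTpos (s+u) (by linarith) x z).ne' h0
  -- the key Chapman--Kolmogorov property for the action
  have hsemi : ∀ t u : ℝ, 0 < t → 0 < u → ∀ f : X → ℝ, Measurable f → (∀ y, 0 ≤ f y) →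
      ∀ Bf : ℝ, (∀ y, f y ≤ Bf) → ∀ x, act t (act u f) x = act (t+u) f x := by
    intro t u ht hu f hf hf0 Bf hfB x
    set g : X → ℝ := act u f with hgdef
    have hg0 : ∀ y, 0 ≤ g y := fun y => integral_nonneg fun z => mul_nonneg (hT0 u hu y z) (hf0 z)
    have hgm : Measurable g := hact_meas u hu f hf hf0
    have hglint : ∀ y, ∫⁻ z, ENNReal.ofReal (T u y z * f z) ∂μ ≤ ENNReal.ofReal M₀ * ENNReal.ofReal Bf := by
      intro y
      calc ∫⁻ z, ENNReal.ofReal (T u y z * f z) ∂μ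
          ≤ ∫⁻ z, ENNReal.ofReal (T u y z) * ENNReal.ofReal Bf ∂μ := by
            apply lintegral_mono fun z => ?_
            rw [ENNReal.ofReal_mul (hT0 u hu y z)]
            exact mul_le_mul_right (ENNReal.ofReal_le_ofReal (hfB z)) _
        _ = (∫⁻ z, ENNReal.ofReal (T u y z) ∂μ) * ENNReal.ofReal Bf :=
            lintegral_mul_const' _ _ ENNReal.ofReal_ne_top
        _ ≤ ENNReal.ofReal M₀ * ENNReal.ofReal Bf := mul_le_mul_left (hKlint u hu y) _
    have hgrep : ∀ y, ENNReal.ofReal (g y) = ∫⁻ z, ENNReal.ofReal (T u y z * f z) ∂μ := by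
      intro y
      rw [hgdef, hact_eq u hu f hf hf0 y]
      exact ENNReal.ofReal_toReal (ne_top_of_le_ne_top
        (ENNReal.mul_ne_top ENNReal.ofReal_ne_top ENNReal.ofReal_ne_top) (hglint y))
    rw [show act t g x = (∫⁻ y, ENNReal.ofReal (T t x y * g y) ∂μ).toReal from
      hact_eq t ht g hgm hg0 x]
    rw [show act (t+u) f x = (∫⁻ z, ENNReal.ofReal (T (t+u) x z * f z) ∂μ).toReal from
      hact_eq (t+u) (by linarith) f hf hf0 x]
    congr 1
    have hswapm : Measurable (Function.uncurry fun y z =>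
        ENNReal.ofReal (T t x y) * (ENNReal.ofReal (T u y z) * ENNReal.ofReal (f z))) := by
      refine Measurable.mul (f := fun p : X × X => ENNReal.ofReal (T t x p.1))
        (g := fun p : X × X => ENNReal.ofReal (T u p.1 p.2) * ENNReal.ofReal (f p.2)) ?_ ?_
      · exact ENNReal.measurable_ofReal.comp ((hTm1 t x).comp measurable_fst)
      · refine Measurable.mul (f := fun p : X × X => ENNReal.ofReal (T u p.1 p.2))
          (g := fun p : X × X => ENNReal.ofReal (f p.2)) ?_ ?_
        · exact ENNReal.measurable_ofReal.comp (hTmeas u)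
        · exact ENNReal.measurable_ofReal.comp (hf.comp measurable_snd)
    calc ∫⁻ y, ENNReal.ofReal (T t x y * g y) ∂μ
        = ∫⁻ y, ENNReal.ofReal (T t x y) *
            ∫⁻ z, ENNReal.ofReal (T u y z) * ENNReal.ofReal (f z) ∂μ ∂μ := by
          apply lintegral_congr fun y => ?_
          rw [ENNReal.ofReal_mul (hT0 t ht x y), hgrep y]
          congr 1
          exact lintegral_congr fun z => by rw [ENNReal.ofReal_mul (hT0 u hu y z)]
      _ = ∫⁻ y, ∫⁻ z, ENNReal.ofReal (T t x y) *
            (ENNReal.ofReal (T u y z) * ENNReal.ofReal (f z)) ∂μ ∂μ := by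
          apply lintegral_congr fun y => ?_
          rw [lintegral_const_mul' _ _ ENNReal.ofReal_ne_top]
      _ = ∫⁻ z, ∫⁻ y, ENNReal.ofReal (T t x y) *
            (ENNReal.ofReal (T u y z) * ENNReal.ofReal (f z)) ∂μ ∂μ :=
          lintegral_lintegral_swap hswapm.aemeasurable
      _ = ∫⁻ z, ENNReal.ofReal (T (t+u) x z * f z) ∂μ := by
          apply lintegral_congr fun z => ?_
          have h1 : (fun y => ENNReal.ofReal (T t x y) *
              (ENNReal.ofReal (T u y z) * ENNReal.ofReal (f z)))
              = fun y => ENNReal.ofReal (T t x y * T u y z) * ENNReal.ofReal (f z) := by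
            funext y
            rw [ENNReal.ofReal_mul (hT0 t ht x y)]
            ring
          have h2 : ∫⁻ y, ENNReal.ofReal (T t x y * T u y z) ∂μ
              = ENNReal.ofReal (T (t+u) x z) := by
            rw [← ofReal_integral_eq_lintegral_ofReal (hInt2 t u ht hu x z)
              (ae_of_all _ fun y => mul_nonneg (hT0 t ht x y) (hT0 u hu y z))]
            rw [← hTsemigroup t u ht hu x z]
          rw [h1, lintegral_mul_const' _ _ ENNReal.ofReal_ne_top, h2,
            ← ENNReal.ofReal_mul (hT0 (t+u) (by linarith) x z)]
  -- shorthand: W applied at times ≥ 1 etc.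
  set ρ : X → ℝ := fun y => T 1 x₀ y with hρdef
  have hρm : Measurable ρ := hTm1 1 x₀
  have hρpos : ∀ y, 0 < ρ y := hTpos 1 one_pos x₀
  have hρint : Integrable ρ μ := hKint 1 one_pos x₀
  have hupos : ∀ (n : ℕ) (u : ℝ), (n:ℝ)+1 ≤ u → 0 < u := by
    intro n u hu
    have : (0:ℝ) ≤ (n:ℝ) := Nat.cast_nonneg n
    linarith
  have henvU : ∀ n : ℕ, ∃ D : ℕ → ℝ, (∀ i, D i ∈ Set.Ici ((n:ℝ)+1)) ∧
      ∀ u ∈ Set.Ici ((n:ℝ)+1), ∀ᵐ x ∂μ, W u x ≤ ⨆ i, W (D i) x := by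
    intro n
    exact exists_countable_envelope μ ρ hρm hρpos hρint W (Set.Ici ((n:ℝ)+1)) ((n:ℝ)+1)
      (Set.mem_Ici.mpr le_rfl)
      (fun u hu => hWmeas u (hupos n u (Set.mem_Ici.mp hu))) m₀ M₀
      (fun u hu x => ⟨hWlb u (hupos n u (Set.mem_Ici.mp hu)) x,
        hWub u (hupos n u (Set.mem_Ici.mp hu)) x⟩)
  choose DU hDUmem hDUp using henvU
  have henvL : ∀ n : ℕ, ∃ D : ℕ → ℝ, (∀ i, D i ∈ Set.Ici ((n:ℝ)+1)) ∧
      ∀ u ∈ Set.Ici ((n:ℝ)+1), ∀ᵐ x ∂μ, -W u x ≤ ⨆ i, -W (D i) x := by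
    intro n
    exact exists_countable_envelope μ ρ hρm hρpos hρint (fun u x => -W u x)
      (Set.Ici ((n:ℝ)+1)) ((n:ℝ)+1) (Set.mem_Ici.mpr le_rfl)
      (fun u hu => (hWmeas u (hupos n u (Set.mem_Ici.mp hu))).neg) (-M₀) (-m₀)
      (fun u hu x => ⟨neg_le_neg (hWub u (hupos n u (Set.mem_Ici.mp hu)) x),
        neg_le_neg (hWlb u (hupos n u (Set.mem_Ici.mp hu)) x)⟩)
  choose DL hDLmem hDLp using henvL
  -- merged index functions
  set DUs : ℕ → ℕ → ℝ := fun n j => DU (n + (Nat.unpair j).1) ((Nat.unpair j).2) with hDUsdef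
  set DLs : ℕ → ℕ → ℝ := fun n j => DL (n + (Nat.unpair j).1) ((Nat.unpair j).2) with hDLsdef
  have hDUs : ∀ (n j : ℕ), (n:ℝ)+1 ≤ DUs n j := by
    intro n j
    have h := Set.mem_Ici.mp (hDUmem (n + (Nat.unpair j).1) ((Nat.unpair j).2))
    have : (n:ℝ) ≤ ((n + (Nat.unpair j).1 : ℕ) : ℝ) := by push_cast; linarith [Nat.cast_nonneg (α := ℝ) (Nat.unpair j).1]
    calc (n:ℝ)+1 ≤ ((n + (Nat.unpair j).1 : ℕ) : ℝ) + 1 := by linarith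
      _ ≤ DUs n j := h
  have hDLs : ∀ (n j : ℕ), (n:ℝ)+1 ≤ DLs n j := by
    intro n j
    have h := Set.mem_Ici.mp (hDLmem (n + (Nat.unpair j).1) ((Nat.unpair j).2))
    have : (n:ℝ) ≤ ((n + (Nat.unpair j).1 : ℕ) : ℝ) := by push_cast; linarith [Nat.cast_nonneg (α := ℝ) (Nat.unpair j).1]
    calc (n:ℝ)+1 ≤ ((n + (Nat.unpair j).1 : ℕ) : ℝ) + 1 := by linarith
      _ ≤ DLs n j := h
  have hDUspos : ∀ n j, 0 < DUs n j := fun n j => hupos n _ (hDUs n j)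
  have hDLspos : ∀ n j, 0 < DLs n j := fun n j => hupos n _ (hDLs n j)
  set g : ℕ → X → ℝ := fun n x => ⨆ j, W (DUs n j) x with hgdef
  set q : ℕ → X → ℝ := fun n x => ⨆ j, -W (DLs n j) x with hqdef
  set h : ℕ → X → ℝ := fun n x => -(q n x) with hhdef
  have hgbdd : ∀ n x, BddAbove (Set.range fun j => W (DUs n j) x) := by
    intro n x
    exact ⟨M₀, by rintro b ⟨j, rfl⟩; exact hWub _ (hDUspos n j) x⟩
  have hqbdd : ∀ n x, BddAbove (Set.range fun j => -W (DLs n j) x) := by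
    intro n x
    exact ⟨-m₀, by rintro b ⟨j, rfl⟩; exact neg_le_neg (hWlb _ (hDLspos n j) x)⟩
  have hgub : ∀ n x, g n x ≤ M₀ := fun n x => ciSup_le fun j => hWub _ (hDUspos n j) x
  have hglb : ∀ n x, m₀ ≤ g n x :=
    fun n x => le_trans (hWlb _ (hDUspos n 0) x) (le_ciSup (hgbdd n x) 0)
  have hhub : ∀ n x, h n x ≤ M₀ := by
    intro n x
    simp only [hhdef]
    have : -M₀ ≤ q n x := le_trans (neg_le_neg (hWub _ (hDLspos n 0) x)) (le_ciSup (hqbdd n x) 0)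
    linarith
  have hhlb : ∀ n x, m₀ ≤ h n x := by
    intro n x
    simp only [hhdef]
    have : q n x ≤ -m₀ := ciSup_le fun j => neg_le_neg (hWlb _ (hDLspos n j) x)
    linarith
  have hgm : ∀ n, Measurable (g n) :=
    fun n => Measurable.iSup fun j => hWmeas _ (hDUspos n j)
  have hhm : ∀ n, Measurable (h n) :=
    fun n => (Measurable.iSup fun j => (hWmeas _ (hDLspos n j)).neg).neg
  have hgmono : ∀ n x, g (n+1) x ≤ g n x := by
    intro n x
    apply ciSup_le
    intro j
    have harg : n + 1 + (Nat.unpair j).1 = n + ((Nat.unpair j).1 + 1) := by omega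
    have hidx : DUs (n+1) j = DUs n (Nat.pair ((Nat.unpair j).1 + 1) ((Nat.unpair j).2)) := by
      simp only [hDUsdef, Nat.unpair_pair, harg]
    rw [hidx]
    exact le_ciSup (hgbdd n x) _
  have hhmono : ∀ n x, h n x ≤ h (n+1) x := by
    intro n x
    simp only [hhdef]
    rw [neg_le_neg_iff]
    apply ciSup_le
    intro j
    have harg : n + 1 + (Nat.unpair j).1 = n + ((Nat.unpair j).1 + 1) := by omega
    have hidx : DLs (n+1) j = DLs n (Nat.pair ((Nat.unpair j).1 + 1) ((Nat.unpair j).2)) := by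
      simp only [hDLsdef, Nat.unpair_pair, harg]
    rw [hidx]
    exact le_ciSup (hqbdd n x) _
  have hgae : ∀ (n : ℕ) (u : ℝ), (n:ℝ)+1 ≤ u → ∀ᵐ x ∂μ, W u x ≤ g n x := by
    intro n u hu
    filter_upwards [hDUp n u (Set.mem_Ici.mpr hu)] with x hx
    refine le_trans hx (ciSup_le fun i => ?_)
    have hidx : DU n i = DUs n (Nat.pair 0 i) := by simp [hDUsdef, Nat.unpair_pair]
    rw [hidx]
    exact le_ciSup (hgbdd n x) _
  have hhae : ∀ (n : ℕ) (u : ℝ), (n:ℝ)+1 ≤ u → ∀ᵐ x ∂μ, h n x ≤ W u x := by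
    intro n u hu
    filter_upwards [hDLp n u (Set.mem_Ici.mpr hu)] with x hx
    have hq : -W u x ≤ q n x := by
      refine le_trans hx (ciSup_le fun i => ?_)
      have hidx : DL n i = DLs n (Nat.pair 0 i) := by simp [hDLsdef, Nat.unpair_pair]
      rw [hidx]
      exact le_ciSup (hqbdd n x) _
    simp only [hhdef]
    linarith
  -- the sub- and super-invariant envelopes
  set ωbar : X → ℝ := fun x => ⨅ n, g n x with hωbardef
  set ωstar : X → ℝ := fun x => ⨆ n, h n x with hωstardef
  have hgbddB : ∀ x, BddBelow (Set.range fun n => g n x) :=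
    fun x => ⟨m₀, by rintro b ⟨n, rfl⟩; exact hglb n x⟩
  have hhbddA : ∀ x, BddAbove (Set.range fun n => h n x) :=
    fun x => ⟨M₀, by rintro b ⟨n, rfl⟩; exact hhub n x⟩
  have hωbar_lb : ∀ x, m₀ ≤ ωbar x := fun x => le_ciInf fun n => hglb n x
  have hωbar_ub : ∀ x, ωbar x ≤ M₀ := fun x => le_trans (ciInf_le (hgbddB x) 0) (hgub 0 x)
  have hωstar_lb : ∀ x, m₀ ≤ ωstar x := fun x => le_trans (hhlb 0 x) (le_ciSup (hhbddA x) 0)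
  have hωstar_ub : ∀ x, ωstar x ≤ M₀ := fun x => ciSup_le fun n => hhub n x
  have hωbar_m : Measurable ωbar := Measurable.iInf hgm
  have hωstar_m : Measurable ωstar := Measurable.iSup hhm
  have hgtend : ∀ x, Tendsto (fun n => g n x) atTop (nhds (ωbar x)) :=
    fun x => tendsto_atTop_ciInf (antitone_nat_of_succ_le fun n => hgmono n x) (hgbddB x)
  have hhtend : ∀ x, Tendsto (fun n => h n x) atTop (nhds (ωstar x)) :=
    fun x => tendsto_atTop_ciSup (monotone_nat_of_le_succ fun n => hhmono n x) (hhbddA x)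
  -- dominated convergence for the action
  have hactDCT : ∀ t : ℝ, 0 < t → ∀ x (F : ℕ → X → ℝ) (fl : X → ℝ), (∀ n, Measurable (F n)) →
      (∀ n y, |F n y| ≤ M₀) → (∀ y, Tendsto (fun n => F n y) atTop (nhds (fl y))) →
      Tendsto (fun n => act t (F n) x) atTop (nhds (act t fl x)) := by
    intro t ht x F fl hFm hFb hFt
    apply tendsto_integral_of_dominated_convergence (bound := fun y => M₀ * T t x y)
    · exact fun n => ((hTm1 t x).mul (hFm n)).aestronglyMeasurable
    · exact (hKint t ht x).const_mul M₀
    · intro n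
      apply ae_of_all
      intro y
      rw [Real.norm_eq_abs, abs_mul, abs_of_nonneg (hT0 t ht x y)]
      calc T t x y * |F n y| ≤ T t x y * M₀ := mul_le_mul_of_nonneg_left (hFb n y) (hT0 t ht x y)
        _ = M₀ * T t x y := mul_comm _ _
    · exact ae_of_all _ fun y => (hFt y).const_mul (T t x y)
  -- W transforms correctly under the action
  have hWone : ∀ u : ℝ, W u = act u (fun _ => (1:ℝ)) := by
    intro u
    funext x
    simp only [hWdef, hactdef, mul_one]
  have hWact : ∀ t u : ℝ, 0 < t → 0 < u → ∀ x, act t (W u) x = W (t+u) x := by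
    intro t u ht hu x
    rw [hWone u, hWone (t+u)]
    exact hsemi t u ht hu (fun _ => (1:ℝ)) measurable_const (fun _ => zero_le_one) 1
      (fun _ => le_rfl) x
  have habsW : ∀ (u : ℝ), 0 < u → ∀ y, |W u y| ≤ M₀ := by
    intro u hu y
    rw [abs_le]
    constructor
    · linarith [hWlb u hu y, hm₀pos]
    · exact hWub u hu y
  have habsg : ∀ n y, |g n y| ≤ M₀ := by
    intro n y; rw [abs_le]; constructor
    · linarith [hglb n y, hm₀pos]
    · exact hgub n y
  have habsh : ∀ n y, |h n y| ≤ M₀ := by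
    intro n y; rw [abs_le]; constructor
    · linarith [hhlb n y, hm₀pos]
    · exact hhub n y
  -- subinvariance of ωbar
  have hbar_sub : ∀ t : ℝ, 0 < t → ∀ x, ωbar x ≤ act t ωbar x := by
    intro t ht x
    have hceil : t ≤ (⌈t⌉₊ : ℝ) := Nat.le_ceil t
    have step1 : ∀ n x', g (n + ⌈t⌉₊) x' ≤ act t (g n) x' := by
      intro n x'
      apply ciSup_le
      intro j
      have hw : ((n + ⌈t⌉₊ : ℕ) : ℝ) + 1 ≤ DUs (n + ⌈t⌉₊) j := hDUs _ j
      set u := DUs (n + ⌈t⌉₊) j - t with hudef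
      have hu1 : (n:ℝ)+1 ≤ u := by
        rw [hudef]
        push_cast at hw
        linarith
      have hupos' : 0 < u := hupos n u hu1
      have h1 : act t (W u) x' ≤ act t (g n) x' :=
        hact_mono_ae t ht (W u) (g n) (hWmeas u hupos') (hgm n) M₀ M₀
          (habsW u hupos') (habsg n) (hgae n u hu1) x'
      have h2 : act t (W u) x' = W (t+u) x' := hWact t u ht hupos' x'
      have h3 : t + u = DUs (n + ⌈t⌉₊) j := by rw [hudef]; ring
      rw [h2, h3] at h1
      exact h1
    have step2 : Tendsto (fun n => act t (g n) x) atTop (nhds (act t ωbar x)) :=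
      hactDCT t ht x g ωbar hgm habsg hgtend
    have step3 : ∀ n, ωbar x ≤ act t (g n) x :=
      fun n => le_trans (ciInf_le (hgbddB x) (n + ⌈t⌉₊)) (step1 n x)
    exact ge_of_tendsto step2 (Eventually.of_forall step3)
  -- superinvariance of ωstar
  have hstar_super : ∀ t : ℝ, 0 < t → ∀ x, act t ωstar x ≤ ωstar x := by
    intro t ht x
    have step1 : ∀ n x', act t (h n) x' ≤ h (n + ⌈t⌉₊) x' := by
      intro n x'
      simp only [hhdef]
      rw [le_neg]
      apply ciSup_le
      intro j
      have hw : ((n + ⌈t⌉₊ : ℕ) : ℝ) + 1 ≤ DLs (n + ⌈t⌉₊) j := hDLs _ j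
      set u := DLs (n + ⌈t⌉₊) j - t with hudef
      have hu1 : (n:ℝ)+1 ≤ u := by
        rw [hudef]
        push_cast at hw
        linarith [Nat.le_ceil t]
      have hupos' : 0 < u := hupos n u hu1
      have h1 : act t (h n) x' ≤ act t (W u) x' :=
        hact_mono_ae t ht (h n) (W u) (hhm n) (hWmeas u hupos') M₀ M₀
          (habsh n) (habsW u hupos') (hhae n u hu1) x'
      have h2 : act t (W u) x' = W (t+u) x' := hWact t u ht hupos' x'
      have h3 : t + u = DLs (n + ⌈t⌉₊) j := by rw [hudef]; ring
      rw [h2, h3] at h1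
      linarith
    have step2 : Tendsto (fun n => act t (h n) x) atTop (nhds (act t ωstar x)) :=
      hactDCT t ht x h ωstar hhm habsh hhtend
    have step3 : ∀ n, act t (h n) x ≤ ωstar x :=
      fun n => le_trans (step1 n x) (le_ciSup (hhbddA x) (n + ⌈t⌉₊))
    exact le_of_tendsto step2 (Eventually.of_forall step3)
  -- the subinvariant floor f₀
  set f₀ : X → ℝ := fun x => (m₀ / M₀) * ωbar x with hf₀def
  have hcpos : 0 < m₀ / M₀ := by positivity
  set c₀ : ℝ := m₀ * m₀ / M₀ with hc₀def
  have hc₀pos : 0 < c₀ := by positivity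
  have hf₀lb : ∀ x, c₀ ≤ f₀ x := by
    intro x
    simp only [hf₀def, hc₀def]
    calc m₀*m₀/M₀ = (m₀/M₀)*m₀ := by ring
      _ ≤ (m₀/M₀) * ωbar x := mul_le_mul_of_nonneg_left (hωbar_lb x) hcpos.le
  have hf₀le : ∀ x, f₀ x ≤ ωstar x := by
    intro x
    simp only [hf₀def]
    calc (m₀/M₀) * ωbar x ≤ (m₀/M₀) * M₀ := mul_le_mul_of_nonneg_left (hωbar_ub x) hcpos.le
      _ = m₀ := by field_simp
      _ ≤ ωstar x := hωstar_lb x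
  have hf₀m : Measurable f₀ := hωbar_m.const_mul _
  have habsf₀ : ∀ y, |f₀ y| ≤ M₀ := by
    intro y
    rw [abs_le]
    constructor
    · linarith [hf₀lb y, hc₀pos, hM₀pos]
    · linarith [hf₀le y, hωstar_ub y]
  have habsωstar : ∀ y, |ωstar y| ≤ M₀ := by
    intro y
    rw [abs_le]
    exact ⟨by linarith [hωstar_lb y, hm₀pos, hM₀pos], hωstar_ub y⟩
  have hf₀sub : ∀ t : ℝ, 0 < t → ∀ x, f₀ x ≤ act t f₀ x := by
    intro t ht x
    have hactsmul : act t f₀ x = (m₀/M₀) * act t ωbar x := by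
      simp only [hf₀def, hactdef]
      rw [← integral_const_mul]
      congr 1
      funext y
      ring
    rw [hactsmul]
    simp only [hf₀def]
    exact mul_le_mul_of_nonneg_left (hbar_sub t ht x) hcpos.le
  -- admissible class S
  set S : Set (X → ℝ) := {f | Measurable f ∧ (∀ x, f₀ x ≤ f x ∧ f x ≤ ωstar x) ∧
      ∀ t, 0 < t → ∀ x, f x ≤ act t f x} with hSdef
  have habsS : ∀ f ∈ S, ∀ y, |f y| ≤ M₀ := by
    intro f hf y
    rw [abs_le]
    obtain ⟨-, hb, -⟩ := hf
    exact ⟨by linarith [(hb y).1, hf₀lb y, hc₀pos, hM₀pos], le_trans (hb y).2 (hωstar_ub y)⟩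
  have hf₀S : f₀ ∈ S := ⟨hf₀m, fun x => ⟨le_rfl, hf₀le x⟩, hf₀sub⟩
  have hS0 : ∀ f ∈ S, ∀ y, 0 ≤ f y :=
    fun f hf y => le_trans (le_trans hc₀pos.le (hf₀lb y)) (hf.2.1 y).1
  have hact_mono : ∀ t : ℝ, 0 < t → ∀ f g : X → ℝ, Measurable f → Measurable g →
      ∀ Bf Bg : ℝ, (∀ y, |f y| ≤ Bf) → (∀ y, |g y| ≤ Bg) → (∀ y, f y ≤ g y) →
      ∀ x, act t f x ≤ act t g x :=
    fun t ht f g hf hg Bf Bg h1 h2 hle x =>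
      hact_mono_ae t ht f g hf hg Bf Bg h1 h2 (ae_of_all _ hle) x
  have hSmax : ∀ f ∈ S, ∀ g ∈ S, (fun x => max (f x) (g x)) ∈ S := by
    intro f hf g hg
    have hfS := hf
    have hgS := hg
    obtain ⟨hfm, hfb, hfs⟩ := hf
    obtain ⟨hgm2, hgb, hgs⟩ := hg
    have hmm : Measurable fun x => max (f x) (g x) := hfm.max hgm2
    have habsmax : ∀ y, |max (f y) (g y)| ≤ M₀ := by
      intro y
      rw [abs_le]
      constructor
      · have := abs_le.mp (habsS f hfS y)
        exact le_trans this.1 (le_trans (le_refl (f y)) (le_max_left _ _))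
      · exact max_le (abs_le.mp (habsS f hfS y)).2 (abs_le.mp (habsS g hgS y)).2
    refine ⟨hmm, fun x => ⟨le_trans (hfb x).1 (le_max_left _ _),
      max_le (hfb x).2 (hgb x).2⟩, ?_⟩
    intro t ht x
    have h1 : act t f x ≤ act t (fun x => max (f x) (g x)) x :=
      hact_mono t ht f _ hfm hmm M₀ M₀ (habsS f hfS) habsmax (fun y => le_max_left _ _) x
    have h2 : act t g x ≤ act t (fun x => max (f x) (g x)) x :=
      hact_mono t ht g _ hgm2 hmm M₀ M₀ (habsS g hgS) habsmax (fun y => le_max_right _ _) x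
    exact max_le (le_trans (hfs t ht x) h1) (le_trans (hgs t ht x) h2)
  have hactub : ∀ t : ℝ, 0 < t → ∀ f : X → ℝ, Measurable f → (∀ y, 0 ≤ f y) →
      (∀ y, f y ≤ M₀) → ∀ x, |act t f x| ≤ M₀ * M₀ := by
    intro t ht f hfm h0 hub x
    rw [abs_le]
    constructor
    · have : 0 ≤ act t f x := integral_nonneg fun y => mul_nonneg (hT0 t ht x y) (h0 y)
      nlinarith [hM₀pos]
    · have habsf : ∀ y, |f y| ≤ M₀ := fun y => abs_le.mpr ⟨by linarith [h0 y, hM₀pos], hub y⟩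
      calc act t f x ≤ act t (fun _ => M₀) x :=
          hact_mono t ht f _ hfm measurable_const M₀ M₀ habsf
            (fun y => by rw [abs_of_pos hM₀pos]) hub x
        _ = M₀ * W t x := by
            simp only [hactdef, hWdef]
            rw [← integral_const_mul]
            congr 1
            funext y
            ring
        _ ≤ M₀ * M₀ := mul_le_mul_of_nonneg_left (hWub t ht x) hM₀pos.le
  have hactS : ∀ f ∈ S, ∀ t : ℝ, 0 < t → act t f ∈ S := by
    intro f hfS t ht
    obtain ⟨hfm, hfb, hfs⟩ := hfS
    have hfS : f ∈ S := ⟨hfm, hfb, hfs⟩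
    have habsf := habsS f hfS
    have h0f := hS0 f hfS
    have hubf : ∀ y, f y ≤ M₀ := fun y => le_trans (le_abs_self _) (habsf y)
    have hafm : Measurable (act t f) := hact_meas t ht f hfm h0f
    have hb : ∀ x, f₀ x ≤ act t f x ∧ act t f x ≤ ωstar x := by
      intro x
      constructor
      · calc f₀ x ≤ act t f₀ x := hf₀sub t ht x
          _ ≤ act t f x :=
            hact_mono t ht f₀ f hf₀m hfm M₀ M₀ habsf₀ habsf (fun y => (hfb y).1) x
      · calc act t f x ≤ act t ωstar x :=
            hact_mono t ht f ωstar hfm hωstar_m M₀ M₀ habsf habsωstar (fun y => (hfb y).2) x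
          _ ≤ ωstar x := hstar_super t ht x
    refine ⟨hafm, hb, ?_⟩
    intro s hs x
    have h0sf : ∀ y, 0 ≤ act s f y :=
      fun y => integral_nonneg fun z => mul_nonneg (hT0 s hs y z) (h0f z)
    have hasm : Measurable (act s f) := hact_meas s hs f hfm h0f
    have hcomm : act s (act t f) x = act t (act s f) x := by
      rw [hsemi s t hs ht f hfm h0f M₀ hubf x, add_comm s t,
        ← hsemi t s ht hs f hfm h0f M₀ hubf x]
    rw [hcomm]
    exact hact_mono t ht f (act s f) hfm hasm M₀ (M₀*M₀) habsf
      (hactub s hs f hfm h0f hubf) (fun y => hfs s hs y) x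
  -- the maximizing functional
  set I : (X → ℝ) → ℝ := fun f => ∫ x, f x * ρ x ∂μ with hIdef
  have hIint : ∀ f : X → ℝ, Measurable f → (∀ y, |f y| ≤ M₀) →
      Integrable (fun x => f x * ρ x) μ := by
    intro f hfm hfb
    exact hρint.bdd_mul hfm.aestronglyMeasurable
      (ae_of_all _ fun y => by rw [Real.norm_eq_abs]; exact hfb y)
  have hImono : ∀ f g : X → ℝ, Measurable f → Measurable g → (∀ y, |f y| ≤ M₀) →
      (∀ y, |g y| ≤ M₀) → (∀ y, f y ≤ g y) → I f ≤ I g := by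
    intro f g hfm hgm hfb hgb hle
    exact integral_mono (hIint f hfm hfb) (hIint g hgm hgb) fun x =>
      mul_le_mul_of_nonneg_right (hle x) (hρpos x).le
  set A2 : Set ℝ := I '' S with hA2def
  have hA2ne : A2.Nonempty := ⟨I f₀, f₀, hf₀S, rfl⟩
  have hA2bdd : BddAbove A2 := by
    refine ⟨M₀ * ∫ x, ρ x ∂μ, ?_⟩
    rintro b ⟨f, hfS2, rfl⟩
    calc I f ≤ ∫ x, M₀ * ρ x ∂μ :=
        integral_mono (hIint f hfS2.1 (habsS f hfS2)) (hρint.const_mul M₀)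
          (fun x => by
            have := le_trans (le_abs_self _) (habsS f hfS2 x)
            exact mul_le_mul_of_nonneg_right this (hρpos x).le)
      _ = M₀ * ∫ x, ρ x ∂μ := integral_const_mul M₀ ρ
  set β := sSup A2 with hβdef
  have hseq : ∀ k : ℕ, ∃ f ∈ S, β - 1/(k+1) < I f := by
    intro k
    have h1 : β - 1/(k+1) < β := by
      have : (0:ℝ) < 1/(k+1) := by positivity
      linarith
    obtain ⟨b, hbA, hb⟩ := exists_lt_of_lt_csSup hA2ne h1
    obtain ⟨f, hfS2, rfl⟩ := hbA
    exact ⟨f, hfS2, hb⟩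
  choose fk hfkS hfkI using hseq
  set Fk : ℕ → X → ℝ :=
    fun n => Nat.rec (fk 0) (fun n Fn => fun x => max (Fn x) (fk (n+1) x)) n with hFkdef
  have hFkS : ∀ n, Fk n ∈ S := by
    intro n
    induction n with
    | zero => exact hfkS 0
    | succ n ih => exact hSmax _ ih _ (hfkS (n+1))
  have hFkmono : ∀ n x, Fk n x ≤ Fk (n+1) x := fun n x => le_max_left _ _
  have hFkge : ∀ n x, fk n x ≤ Fk n x := by
    intro n x
    cases n with
    | zero => exact le_rfl
    | succ n => exact le_max_right _ _
  set ω : X → ℝ := fun x => ⨆ n, Fk n x with hωdef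
  have hFkbdd : ∀ x, BddAbove (Set.range fun n => Fk n x) :=
    fun x => ⟨M₀, by rintro b ⟨n, rfl⟩; exact le_trans ((hFkS n).2.1 x).2 (hωstar_ub x)⟩
  have hωb : ∀ x, f₀ x ≤ ω x ∧ ω x ≤ ωstar x := by
    intro x
    exact ⟨le_trans ((hFkS 0).2.1 x).1 (le_ciSup (hFkbdd x) 0),
      ciSup_le fun n => ((hFkS n).2.1 x).2⟩
  have hωm : Measurable ω := Measurable.iSup fun n => (hFkS n).1
  have hωtend : ∀ x, Tendsto (fun n => Fk n x) atTop (nhds (ω x)) :=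
    fun x => tendsto_atTop_ciSup (monotone_nat_of_le_succ fun n => hFkmono n x) (hFkbdd x)
  have habsω : ∀ y, |ω y| ≤ M₀ := by
    intro y
    rw [abs_le]
    exact ⟨by linarith [(hωb y).1, hf₀lb y, hc₀pos, hM₀pos],
      le_trans (hωb y).2 (hωstar_ub y)⟩
  have hωsub : ∀ t : ℝ, 0 < t → ∀ x, ω x ≤ act t ω x := by
    intro t ht x
    have step2 : Tendsto (fun n => act t (Fk n) x) atTop (nhds (act t ω x)) :=
      hactDCT t ht x Fk ω (fun n => (hFkS n).1) (fun n => habsS _ (hFkS n)) hωtend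
    exact le_of_tendsto_of_tendsto' (hωtend x) step2 fun n => (hFkS n).2.2 t ht x
  have hωS : ω ∈ S := ⟨hωm, hωb, hωsub⟩
  have hIωβ : I ω = β := by
    have hub : I ω ≤ β := le_csSup hA2bdd ⟨ω, hωS, rfl⟩
    have hlb : β ≤ I ω := by
      by_contra hcon
      push_neg at hcon
      obtain ⟨k, hk⟩ := exists_nat_one_div_lt (show (0:ℝ) < β - I ω by linarith)
      have h1 : β - 1/(k+1) < I (fk k) := hfkI k
      have h2 : I (fk k) ≤ I ω := hImono (fk k) ω (hfkS k).1 hωm (habsS _ (hfkS k)) habsω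
        (fun y => le_trans (hFkge k y) (le_ciSup (hFkbdd y) k))
      have h3 : (1:ℝ)/(k+1) < β - I ω := hk
      linarith
    linarith
  -- final conclusion
  refine ⟨max M₀ (M₀/(m₀*m₀)), lt_of_lt_of_le hM₀pos (le_max_left _ _), ω, hωm, ?_, ?_⟩
  · intro x
    constructor
    · have h1 : (max M₀ (M₀/(m₀*m₀)))⁻¹ ≤ (M₀/(m₀*m₀))⁻¹ :=
        inv_anti₀ (by positivity) (le_max_right _ _)
      have h2 : (M₀/(m₀*m₀))⁻¹ = c₀ := by
        rw [hc₀def, inv_div]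
      calc (max M₀ (M₀/(m₀*m₀)))⁻¹ ≤ c₀ := by rw [← h2]; exact h1
        _ ≤ f₀ x := hf₀lb x
        _ ≤ ω x := (hωb x).1
    · exact le_trans (le_trans (hωb x).2 (hωstar_ub x)) (le_max_left _ _)
  · intro t ht
    have hgS : act t ω ∈ S := hactS ω hωS t ht
    have hge : ∀ x, ω x ≤ act t ω x := hωsub t ht
    have hIle : I (act t ω) ≤ β := le_csSup hA2bdd ⟨act t ω, hgS, rfl⟩
    have h0 : I (act t ω) = I ω :=
      le_antisymm (by rw [hIωβ]; exact hIle)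
        (hImono ω (act t ω) hωm hgS.1 habsω (habsS _ hgS) hge)
    have heqf : (fun x => (act t ω x - ω x) * ρ x)
        = fun x => act t ω x * ρ x - ω x * ρ x := by
      funext x; ring
    have hdiff : ∫ x, (act t ω x - ω x) * ρ x ∂μ = 0 := by
      rw [heqf, integral_sub (hIint _ hgS.1 (habsS _ hgS)) (hIint _ hωm habsω)]
      have h1 : (∫ x, act t ω x * ρ x ∂μ) = I (act t ω) := rfl
      have h2 : (∫ x, ω x * ρ x ∂μ) = I ω := rfl
      rw [h1, h2, h0, sub_self]
    have hint2 : Integrable (fun x => (act t ω x - ω x) * ρ x) μ := by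
      rw [heqf]
      exact (hIint _ hgS.1 (habsS _ hgS)).sub (hIint _ hωm habsω)
    have hae0 : (fun x => (act t ω x - ω x) * ρ x) =ᵐ[μ] 0 :=
      (integral_eq_zero_iff_of_nonneg
        (fun x => mul_nonneg (by linarith [hge x]) (hρpos x).le) hint2).mp hdiff
    filter_upwards [hae0] with x hx
    have hzero : act t ω x - ω x = 0 := by
      rcases mul_eq_zero.mp hx with h1 | h2
      · exact h1
      · exact absurd h2 (hρpos x).ne'
    have hfinal : act t ω x = ω x := by linarith
    calc ∫ y, T t x y * ω y ∂μ = act t ω x := by rw [hactdef]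
      _ = ω x := hfinal
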